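/- Let Q = I − βP with P ≥ 0 entrywise with zero diagonal, β ≥ 0, ω ∈ (0,1], and suppose β·||P e_u||_1 ≤ 1 for all u. If r ≥ 0 entrywise and r' = r − ω r_u Q e_u for some coordinate u, then ||r'||_1 ≤ ||r||_1. -/
import Mathlib


open Matrix

/-- One LocalSOR coordinate update does not increase the ℓ1 norm of the residual:
with `Q = I - βP`, `P ≥ 0` with zero diagonal, `β ≥ 0`, `ω ∈ (0,1]`,
`β·‖P e_u‖₁ ≤ 1` for every column, if `r ≥ 0` and `r' = r - ω r_u (Q e_u)`
then `‖r'‖₁ ≤ ‖r‖₁`. -/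
theorem localSOR_step_monotone (n : ℕ) (P : Matrix (Fin n) (Fin n) ℝ)
    (hP : ∀ i j, 0 ≤ P i j) (hdiag : ∀ i, P i i = 0)
    (β : ℝ) (hβ : 0 ≤ β) (ω : ℝ) (hω0 : 0 < ω) (hω1 : ω ≤ 1)
    (hcol : ∀ u, β * ∑ i, P i u ≤ 1)
    (r : Fin n → ℝ) (hr : ∀ i, 0 ≤ r i) (u : Fin n)
    (r' : Fin n → ℝ)
    (hr' : r' = r - (ω * r u) • ((1 - β • P) *ᵥ Pi.single u 1)) :
    (∑ i, |r' i|) ≤ ∑ i, |r i| := by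
  have key : ∀ i, r' i = r i - ω * r u * ((if i = u then 1 else 0) - β * P i u) := by
    intro i
    simp [hr', mulVec, dotProduct, Matrix.one_apply, Pi.single_apply,
      Finset.mul_sum, mul_ite, sub_mul, ite_sub_ite, Finset.sum_ite_eq']
  have hnn : ∀ i, 0 ≤ r' i := by
    intro i
    rw [key i]
    rcases eq_or_ne i u with h | h
    · subst h
      simp [hdiag]
      nlinarith [hr i]
    · simp [h]
      have := mul_nonneg (mul_nonneg hω0.le (hr u)) (mul_nonneg hβ (hP i u))
      linarith [hr i]
  have habs : ∀ i, |r' i| = r' i := fun i => abs_of_nonneg (hnn i)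
  have habs' : ∀ i, |r i| = r i := fun i => abs_of_nonneg (hr i)
  have e1 : ∑ i, |r' i| = ∑ i, r' i := Finset.sum_congr rfl fun i _ => habs i
  have e2 : ∑ i, |r i| = ∑ i, r i := Finset.sum_congr rfl fun i _ => habs' i
  rw [e1, e2]
  simp only [key]
  rw [Finset.sum_sub_distrib]
  have : ∑ i, ω * r u * ((if i = u then 1 else 0) - β * P i u)
      = ω * r u * (1 - β * ∑ i, P i u) := by
    rw [← Finset.mul_sum]
    congr 1
    rw [Finset.sum_sub_distrib, ← Finset.mul_sum]
    simp
  rw [this]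
  have h1 : 0 ≤ 1 - β * ∑ i, P i u := by linarith [hcol u]
  have := mul_nonneg (mul_nonneg hω0.le (hr u)) h1
  linarith
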